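/- Let n ≥ 2 be a natural number and let f : ℝ → ℝ be defined by f(x) = ∫_0^x (1 - t^n)^(-(n-1)/n) dt. Then for every natural number l ≥ 1, writing l = n·k + r with 0 ≤ r ≤ n-1 by the division algorithm: if r = 1 then the l-th derivative of f at 0 equals (∏_{i=0}^{k-1} ((n-1)/n + i)) · (k·n)!/k!, and if r ≠ 1 then the l-th derivative of f at 0 equals 0. -/

import Mathlib

open Real intervalIntegral Finset


noncomputable def binCoef (a : ℝ) (k : ℕ) : ℝ := (∏ i ∈ Finset.range k, (a + i)) / k.factorial

lemma binCoef_zero (a : ℝ) : binCoef a 0 = 1 := by simp [binCoef]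

lemma binCoef_succ (a : ℝ) (k : ℕ) :
    binCoef a (k + 1) = binCoef a k * ((a + k) / (k + 1)) := by
  have hk : (k.factorial : ℝ) ≠ 0 := by positivity
  have h2 : ((k:ℝ) + 1) ≠ 0 := by positivity
  have hfs : (((k+1).factorial : ℕ) : ℝ) = ((k:ℝ) + 1) * k.factorial := by
    rw [Nat.factorial_succ]; push_cast; ring
  rw [binCoef, binCoef, Finset.prod_range_succ, hfs, div_mul_div_comm,
    mul_comm ((k.factorial:ℝ)) ((k:ℝ)+1)]

lemma binCoef_pos {a : ℝ} (ha : 0 < a) (k : ℕ) : 0 < binCoef a k := by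
  induction k with
  | zero => simp [binCoef_zero]
  | succ k ih =>
    rw [binCoef_succ]
    have h1 : (0:ℝ) < a + k := by positivity
    have h2 : (0:ℝ) < (k:ℝ) + 1 := by positivity
    positivity

lemma binCoef_le_one {a : ℝ} (ha : 0 < a) (ha1 : a ≤ 1) (k : ℕ) : binCoef a k ≤ 1 := by
  induction k with
  | zero => simp [binCoef_zero]
  | succ k ih =>
    rw [binCoef_succ]
    have h2 : (0:ℝ) < (k:ℝ) + 1 := by positivity
    have h1 : (a + k) / (k + 1) ≤ 1 := by
      rw [div_le_one h2]; linarith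
    have h3 : (0:ℝ) ≤ (a + k) / (k + 1) := by positivity
    nlinarith [binCoef_pos ha k]

lemma binCoef_succ_mul (a : ℝ) (k : ℕ) :
    binCoef a (k + 1) * ((k : ℝ) + 1) = binCoef a k * (a + k) := by
  rw [binCoef_succ]
  have h2 : ((k:ℝ) + 1) ≠ 0 := by positivity
  field_simp

lemma summable_binCoef {a : ℝ} (ha : 0 < a) (ha1 : a ≤ 1) {y : ℝ} (hy : |y| < 1) :
    Summable (fun k => binCoef a k * y ^ k) := by
  apply Summable.of_norm_bounded (summable_geometric_of_lt_one (abs_nonneg y) hy)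
  intro k
  rw [norm_mul, norm_pow, Real.norm_eq_abs, Real.norm_eq_abs]
  calc |binCoef a k| * |y| ^ k ≤ 1 * |y| ^ k := by
        gcongr
        rw [abs_of_pos (binCoef_pos ha k)]; exact binCoef_le_one ha ha1 k
    _ = |y| ^ k := one_mul _

lemma summable_mul_geom {ρ : ℝ} (hρ0 : 0 ≤ ρ) (hρ : ρ < 1) :
    Summable (fun k : ℕ => (k : ℝ) * ρ ^ (k - 1)) := by
  have hρ' : ‖ρ‖ < 1 := by rwa [Real.norm_eq_abs, abs_of_nonneg hρ0]
  have h1 : Summable (fun k : ℕ => ((k:ℝ) + 1) * ρ ^ k) := by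
    have h2 := summable_pow_mul_geometric_of_norm_lt_one 1 hρ'
    have h3 := summable_geometric_of_lt_one hρ0 hρ
    exact (h2.add h3).congr (fun k => by push_cast; ring)
  rw [← summable_nat_add_iff 1]
  exact h1.congr (fun k => by push_cast [Nat.add_sub_cancel]; ring)

lemma summable_binCoef_deriv {a : ℝ} (ha : 0 < a) (ha1 : a ≤ 1) {y ρ : ℝ}
    (hy : |y| ≤ ρ) (hρ : ρ < 1) :
    Summable (fun k : ℕ => binCoef a k * ((k : ℝ) * y ^ (k - 1))) := by
  have hρ0 : 0 ≤ ρ := le_trans (abs_nonneg y) hy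
  apply Summable.of_norm_bounded (summable_mul_geom hρ0 hρ)
  intro k
  rw [norm_mul, norm_mul, norm_pow, Real.norm_eq_abs, Real.norm_eq_abs, Real.norm_eq_abs]
  rw [abs_of_pos (binCoef_pos ha k), Nat.abs_cast]
  have hb1 : |y| ^ (k-1) ≤ ρ ^ (k-1) := pow_le_pow_left₀ (abs_nonneg y) hy _
  have hb2 : binCoef a k * ((k : ℝ) * |y| ^ (k-1)) ≤ 1 * ((k:ℝ) * ρ ^ (k-1)) := by
    apply mul_le_mul (binCoef_le_one ha ha1 k) _ (by positivity) zero_le_one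
    exact mul_le_mul_of_nonneg_left hb1 (Nat.cast_nonneg k)
  linarith


/-- Sum function of the binomial series. -/
noncomputable def binS (a : ℝ) (z : ℝ) : ℝ := ∑' k, binCoef a k * z ^ k

/-- Derivative function of the binomial series. -/
noncomputable def binD (a : ℝ) (z : ℝ) : ℝ := ∑' k, binCoef a k * ((k : ℝ) * z ^ (k - 1))

lemma binS_hasDerivAt (ha : 0 < a) (ha1 : a ≤ 1) {z : ℝ} (hz : |z| < 1) :
    HasDerivAt (binS a) (binD a z) z := by
  set ρ : ℝ := (|z| + 1) / 2 with hρdef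
  have hz0 : 0 ≤ |z| := abs_nonneg z
  have hρ0 : 0 < ρ := by positivity
  have hzρ : |z| < ρ := by rw [hρdef]; linarith
  have hρ1 : ρ < 1 := by rw [hρdef]; linarith
  have hsum : Summable (fun k : ℕ => (k : ℝ) * ρ ^ (k - 1)) := summable_mul_geom hρ0.le hρ1
  have h := hasDerivAt_tsum_of_isPreconnected (g := fun (k : ℕ) (w : ℝ) => binCoef a k * w ^ k)
      (g' := fun (k : ℕ) (w : ℝ) => binCoef a k * ((k : ℝ) * w ^ (k - 1)))
      (u := fun k : ℕ => (k : ℝ) * ρ ^ (k - 1)) (t := Set.Ioo (-ρ) ρ) (y₀ := 0) (y := z)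
      hsum isOpen_Ioo (convex_Ioo _ _).isPreconnected
      (fun k w _ => (hasDerivAt_pow k w).const_mul _)
      ?_ (by constructor <;> [linarith; linarith]) ?_ (abs_lt.mp hzρ)
  · exact h
  · intro k w hw
    have hwρ : |w| ≤ ρ := le_of_lt (abs_lt.mpr ⟨hw.1, hw.2⟩)
    rw [Real.norm_eq_abs, abs_mul, abs_mul, abs_pow, abs_of_pos (binCoef_pos ha k), Nat.abs_cast]
    have hb1 : |w| ^ (k-1) ≤ ρ ^ (k-1) := pow_le_pow_left₀ (abs_nonneg w) hwρ _
    have := binCoef_le_one ha ha1 k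
    have hck := binCoef_pos ha k
    calc binCoef a k * ((k : ℝ) * |w| ^ (k-1)) ≤ 1 * ((k:ℝ) * ρ ^ (k-1)) := by
          apply mul_le_mul (binCoef_le_one ha ha1 k) _ (by positivity) zero_le_one
          exact mul_le_mul_of_nonneg_left hb1 (Nat.cast_nonneg k)
      _ = (k:ℝ) * ρ ^ (k-1) := one_mul _
  · apply summable_of_ne_finset_zero (s := {0})
    intro k hk
    have : k ≠ 0 := by simpa using hk
    simp [zero_pow this]

lemma binIdentity (ha : 0 < a) (ha1 : a ≤ 1) {z : ℝ} (hz : |z| < 1) :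
    (1 - z) * binD a z = a * binS a z := by
  have hD : HasSum (fun k => binCoef a k * ((k : ℝ) * z ^ (k - 1))) (binD a z) :=
    (summable_binCoef_deriv ha ha1 (le_refl |z|) hz).hasSum
  have hS : HasSum (fun k => binCoef a k * z ^ k) (binS a z) :=
    (summable_binCoef ha ha1 hz).hasSum
  -- shifted series
  have h2 : HasSum (fun k : ℕ => (a + k) * binCoef a k * z ^ k) (binD a z) := by
    have h := (hasSum_nat_add_iff' (f := fun k => binCoef a k * ((k : ℝ) * z ^ (k - 1))) 1).mpr hD
    simp only [Finset.range_one, Finset.sum_singleton, Nat.cast_zero, zero_mul, mul_zero,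
      sub_zero] at h
    refine h.congr_fun fun k => ?_
    rw [Nat.add_sub_cancel]
    push_cast
    linear_combination (-(z ^ k)) * binCoef_succ_mul a k
  have h3 : HasSum (fun k : ℕ => (k : ℝ) * binCoef a k * z ^ k) (z * binD a z) := by
    refine (hD.mul_left z).congr_fun fun k => ?_
    cases k with
    | zero => simp
    | succ j =>
      push_cast [Nat.add_sub_cancel]
      ring
  have h4 := h2.sub h3
  have h4' : HasSum (fun k : ℕ => a * (binCoef a k * z ^ k)) (binD a z - z * binD a z) :=
    h4.congr_fun fun k => by ring
  have h5 := hS.mul_left a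
  have := h4'.unique h5
  linarith [this]

lemma binS_mul_rpow_eq_one (ha : 0 < a) (ha1 : a ≤ 1) {z : ℝ} (hz : z ∈ Set.Ioo (-1 : ℝ) 1) :
    binS a z * (1 - z) ^ a = 1 := by
  set F : ℝ → ℝ := fun w => binS a w * (1 - w) ^ a with hFdef
  have key : ∀ w ∈ Set.Ioo (-1 : ℝ) 1, HasDerivAt F 0 w := by
    intro w hw
    have hw' : |w| < 1 := abs_lt.mpr ⟨hw.1, hw.2⟩
    have hpos : (0 : ℝ) < 1 - w := by cases hw; linarith
    have hu : HasDerivAt (fun v : ℝ => 1 - v) (-1) w := (hasDerivAt_id w).const_sub 1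
    have hrpow : HasDerivAt (fun x : ℝ => x ^ a) (a * (1 - w) ^ (a - 1)) (1 - w) :=
      Real.hasDerivAt_rpow_const (Or.inl hpos.ne')
    have h6 : HasDerivAt (fun v : ℝ => (1 - v) ^ a) (a * (1 - w) ^ (a - 1) * (-1)) w :=
      hrpow.comp w hu
    have h7 := (binS_hasDerivAt ha ha1 hw').mul h6
    have hval : binD a w * (1 - w) ^ a + binS a w * (a * (1 - w) ^ (a - 1) * (-1)) = 0 := by
      have hsplit : (1 - w) ^ a = (1 - w) * (1 - w) ^ (a - 1) := by
        have hne : 1 + (a - 1) ≠ 0 := by intro h; apply ha.ne'; linarith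
        rw [← Real.rpow_one_add' hpos.le hne]
        norm_num
      rw [hsplit]
      have hid := binIdentity ha ha1 hw'
      linear_combination (1 - w) ^ (a - 1) * hid
    rw [hval] at h7
    exact h7
  have hdiff : DifferentiableOn ℝ F (Set.Ioo (-1 : ℝ) 1) := fun w hw =>
    (key w hw).differentiableAt.differentiableWithinAt
  have hfd : ∀ w ∈ Set.Ioo (-1 : ℝ) 1, fderivWithin ℝ F (Set.Ioo (-1 : ℝ) 1) w = 0 := by
    intro w hw
    have h0 : HasFDerivAt F (ContinuousLinearMap.smulRight (1 : ℝ →L[ℝ] ℝ) (0:ℝ)) w :=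
      (key w hw).hasFDerivAt
    have h1 : (ContinuousLinearMap.smulRight (1 : ℝ →L[ℝ] ℝ) (0:ℝ)) = 0 := by
      ext x; simp
    rw [h1] at h0
    exact (h0.hasFDerivWithinAt).fderivWithin (isOpen_Ioo.uniqueDiffWithinAt hw)
  have hconst := (convex_Ioo (-1 : ℝ) 1).is_const_of_fderivWithin_eq_zero hdiff hfd hz
    (Set.mem_Ioo.mpr ⟨by norm_num, by norm_num⟩ : (0:ℝ) ∈ Set.Ioo (-1:ℝ) 1)
  have hF0 : F 0 = 1 := by
    have hb : binS a 0 = 1 := by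
      rw [binS, tsum_eq_single 0 (fun k hk => by simp [zero_pow hk])]
      simp [binCoef_zero]
    simp [hFdef, hb]
  rw [← hconst] at hF0
  exact hF0

lemma hasSum_binomial (ha : 0 < a) (ha1 : a ≤ 1) {y : ℝ} (hy : |y| < 1) :
    HasSum (fun k => binCoef a k * y ^ k) ((1 - y) ^ (-a)) := by
  have hy' : y ∈ Set.Ioo (-1 : ℝ) 1 := ⟨(abs_lt.mp hy).1, (abs_lt.mp hy).2⟩
  have hpos : (0 : ℝ) < 1 - y := by cases hy'; linarith
  have h1 := binS_mul_rpow_eq_one ha ha1 hy'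
  have h2 : binS a y = (1 - y) ^ (-a) := by
    rw [Real.rpow_neg hpos.le]
    field_simp at h1 ⊢
    linarith [h1]
  have := (summable_binCoef ha ha1 hy).hasSum
  rwa [show ∑' k, binCoef a k * y ^ k = binS a y from rfl, h2] at this

/-- Coefficients of the power series of `(1-x^n)^(-a)`. -/
noncomputable def gapCoef (n : ℕ) (a : ℝ) (m : ℕ) : ℝ :=
  if n ∣ m then binCoef a (m / n) else 0

lemma abs_gapCoef_le_one {n : ℕ} {a : ℝ} (ha : 0 < a) (ha1 : a ≤ 1) (m : ℕ) :
    |gapCoef n a m| ≤ 1 := by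
  rw [gapCoef]
  split
  · rw [abs_of_pos (binCoef_pos ha _)]; exact binCoef_le_one ha ha1 _
  · simp

lemma hasSum_gap {n : ℕ} (hn : 2 ≤ n) {a : ℝ} (ha : 0 < a) (ha1 : a ≤ 1) {x : ℝ}
    (hx : |x| < 1) :
    HasSum (fun m => gapCoef n a m * x ^ m) ((1 - x ^ n) ^ (-a)) := by
  have hn0 : n ≠ 0 := by omega
  have hxn : |x ^ n| < 1 := by
    rw [abs_pow]
    exact pow_lt_one₀ (abs_nonneg x) hx hn0
  have h := hasSum_binomial ha ha1 hxn
  have h' : HasSum (fun k => gapCoef n a (n * k) * x ^ (n * k)) ((1 - x ^ n) ^ (-a)) := by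
    refine h.congr_fun fun k => ?_
    rw [gapCoef, if_pos (dvd_mul_right n k), Nat.mul_div_cancel_left k (by omega), pow_mul]
  have hinj : Function.Injective (fun k : ℕ => n * k) := fun i j h => by
    simp only at h
    exact Nat.eq_of_mul_eq_mul_left (by omega) h
  refine (Function.Injective.hasSum_iff hinj ?_).mp h'
  intro m hm
  have hnd : ¬ n ∣ m := by
    rintro ⟨c, hc⟩
    exact hm ⟨c, hc.symm⟩
  simp [gapCoef, hnd]

lemma gap_hasFPowerSeries {n : ℕ} (hn : 2 ≤ n) {a : ℝ} (ha : 0 < a) (ha1 : a ≤ 1) :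
    HasFPowerSeriesOnBall (fun x : ℝ => (1 - x ^ n) ^ (-a))
      (FormalMultilinearSeries.ofScalars ℝ (gapCoef n a)) 0 1 := by
  refine ⟨?_, one_pos, ?_⟩
  · have h := FormalMultilinearSeries.le_radius_of_bound
      (FormalMultilinearSeries.ofScalars ℝ (gapCoef n a)) 1 (r := 1) (fun m => ?_)
    · simpa using h
    · rw [FormalMultilinearSeries.ofScalars_norm, Real.norm_eq_abs]
      simpa using abs_gapCoef_le_one ha ha1 m
  · intro y hy
    have hy' : |y| < 1 := by
      rw [EMetric.mem_ball, edist_dist, dist_zero_right, Real.norm_eq_abs] at hy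
      exact (ENNReal.ofReal_lt_one).mp hy
    have h := hasSum_gap hn ha ha1 hy'
    simp only [FormalMultilinearSeries.ofScalars_apply_eq, smul_eq_mul, zero_add]
    exact h

lemma iteratedDeriv_gap {n : ℕ} (hn : 2 ≤ n) {a : ℝ} (ha : 0 < a) (ha1 : a ≤ 1) (m : ℕ) :
    iteratedDeriv m (fun x : ℝ => (1 - x ^ n) ^ (-a)) 0
      = (m.factorial : ℝ) * gapCoef n a m := by
  have h := (gap_hasFPowerSeries hn ha ha1).factorial_smul (1 : ℝ) m
  rw [FormalMultilinearSeries.ofScalars_apply_eq] at h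
  rw [iteratedDeriv_eq_iteratedFDeriv, ← h]
  simp [smul_eq_mul]

/-- Derivatives at `0` of `arcsin_n(x) = ∫_0^x (1-t^n)^(-(n-1)/n) dt`: writing
`l = n k + r` by the division algorithm, the `l`-th derivative at `0` is
`((n-1)/n)^{(k)} (kn)!/k!` if `r = 1`, and `0` otherwise. -/
theorem arcsinp_iteratedDeriv (n : ℕ) (hn : 2 ≤ n)
    (f : ℝ → ℝ)
    (hf : f = fun x : ℝ => ∫ t in (0 : ℝ)..x, (1 - t ^ n) ^ (-(((n : ℝ) - 1) / n)))
    (l : ℕ) (hl : 1 ≤ l) (k r : ℕ) (hlk : l = n * k + r) (hr : r ≤ n - 1) :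
    (r = 1 →
      iteratedDeriv l f 0
        = (∏ i ∈ Finset.range k, (((n : ℝ) - 1) / n + i))
            * ((k * n).factorial : ℝ) / (k.factorial : ℝ)) ∧
    (r ≠ 1 → iteratedDeriv l f 0 = 0) := by
  set a : ℝ := ((n : ℝ) - 1) / n with hadef
  have hn2 : (2 : ℝ) ≤ n := by exact_mod_cast hn
  have ha : 0 < a := by
    apply div_pos <;> linarith
  have ha1 : a ≤ 1 := by
    rw [hadef, div_le_one (by linarith)]; linarith
  set g : ℝ → ℝ := fun x : ℝ => (1 - x ^ n) ^ (-a) with hgdef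
  -- continuity of g on Ioo (-1) 1
  have hpos : ∀ x ∈ Set.Ioo (-1 : ℝ) 1, (0 : ℝ) < 1 - x ^ n := by
    intro x hx
    have hx' : |x| < 1 := abs_lt.mpr ⟨hx.1, hx.2⟩
    have : |x ^ n| < 1 := by rw [abs_pow]; exact pow_lt_one₀ (abs_nonneg x) hx' (by omega)
    have := (abs_lt.mp this).2
    linarith
  have hcont : ∀ x ∈ Set.Ioo (-1 : ℝ) 1, ContinuousAt g x := by
    intro x hx
    apply ContinuousAt.rpow_const
    · exact (continuousAt_const.sub (continuousAt_pow x n))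
    · exact Or.inl (hpos x hx).ne'
  have hgon : ContinuousOn g (Set.Ioo (-1 : ℝ) 1) :=
    fun x hx => (hcont x hx).continuousWithinAt
  -- f has derivative g on Ioo (-1) 1
  have hderiv : ∀ x ∈ Set.Ioo (-1 : ℝ) 1, HasDerivAt f (g x) x := by
    intro x hx
    have hsub : Set.uIcc (0 : ℝ) x ⊆ Set.Ioo (-1 : ℝ) 1 := by
      intro t ht
      rw [Set.mem_uIcc] at ht
      obtain ⟨hx1, hx2⟩ := hx
      rcases ht with ⟨h1, h2⟩ | ⟨h1, h2⟩ <;> constructor <;> linarith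
    have hint : IntervalIntegrable g MeasureTheory.volume 0 x :=
      (hgon.mono hsub).intervalIntegrable
    have hmeas := ContinuousOn.stronglyMeasurableAtFilter
      (μ := MeasureTheory.volume) isOpen_Ioo hgon x hx
    have h := intervalIntegral.integral_hasDerivAt_right hint hmeas (hcont x hx)
    rw [hf]
    exact h
  have h01 : (0 : ℝ) ∈ Set.Ioo (-1 : ℝ) 1 := by norm_num
  have hEq : deriv f =ᶠ[nhds 0] g := by
    filter_upwards [isOpen_Ioo.mem_nhds h01] with x hx using (hderiv x hx).deriv
  obtain ⟨m, rfl⟩ : ∃ m, l = m + 1 := ⟨l - 1, by omega⟩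
  have hmain : iteratedDeriv (m + 1) f 0 = (m.factorial : ℝ) * gapCoef n a m := by
    rw [iteratedDeriv_succ', Filter.EventuallyEq.iteratedDeriv_eq m hEq]
    exact iteratedDeriv_gap hn ha ha1 m
  constructor
  · intro hr1
    subst hr1
    have hm : m = n * k := by omega
    subst hm
    have hdvd : n ∣ n * k := dvd_mul_right n k
    rw [hmain, gapCoef, if_pos hdvd, Nat.mul_div_cancel_left k (by omega), binCoef,
      mul_comm k n]
    have hk : (k.factorial : ℝ) ≠ 0 := by positivity
    field_simp
  · intro hr1
    have hnd : ¬ n ∣ m := by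
      intro hdvd
      rcases Nat.eq_zero_or_pos r with hr0 | hrpos
      · -- r = 0 : l = n * k, m = n*k - 1
        subst hr0
        have hk1 : 1 ≤ k := by
          rcases Nat.eq_zero_or_pos k with h | h
          · exfalso; rw [h, Nat.mul_zero] at hlk; omega
          · exact h
        have hm : m = n * k - 1 := by omega
        have h1 : n ∣ n * k - m := Nat.dvd_sub (dvd_mul_right n k) hdvd
        have h2 : n * k - m = 1 := by omega
        rw [h2] at h1
        have := Nat.le_of_dvd one_pos h1
        omega
      · -- r ≥ 2 (since r ≠ 1), m = n*k + (r-1)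
        have hr2 : 2 ≤ r := by omega
        have hm : m = n * k + (r - 1) := by omega
        rw [hm] at hdvd
        have h1 : n ∣ r - 1 := (Nat.dvd_add_right (dvd_mul_right n k)).mp hdvd
        have h2 := Nat.le_of_dvd (by omega) h1
        omega
    rw [hmain, gapCoef, if_neg hnd, mul_zero]
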